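/- arXiv:2406.06188 — 2 statements merged into one kernel-verified Lean document; each statement's English description precedes it below -/
import Mathlib

section
/- (Croft–Kingman lemma) Let f : [0,\infty) \to \mathbb{R} be right-continuous. If for every t > 0 the sequence f(nt) tends to 0 as n \to \infty (n ranging over positive integers), then f(t) \to 0 as t \to \infty. -/
open Filter Set

/-- Core density fact: given intervals `(a j, b j)` with `a j > j`, for every `0 < c < d`
and every `k`, some multiple of some point of `(c, d)` lands in some `(a j, b j)` with
`j ≥ k`. -/
private lemma ck_core {a b : ℕ → ℝ} (ha : ∀ j : ℕ, (j : ℝ) < a j) (hab : ∀ j, a j < b j)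
    (k : ℕ) {c d : ℝ} (hc : 0 < c) (hcd : c < d) :
    ∃ t ∈ Set.Ioo c d, ∃ n j : ℕ, k ≤ j ∧ (n : ℝ) * t ∈ Set.Ioo (a j) (b j) := by
  have hdc : 0 < d - c := by linarith
  set N : ℕ := ⌈c / (d - c)⌉₊ + 1 with hNdef
  have hN1 : 1 ≤ N := Nat.le_add_left 1 _
  have hN1' : (1 : ℝ) ≤ (N : ℝ) := by exact_mod_cast hN1
  have hNc : c < (N : ℝ) * (d - c) := by
    have h1 : c / (d - c) < (N : ℝ) := by
      calc c / (d - c) ≤ (⌈c / (d - c)⌉₊ : ℝ) := Nat.le_ceil _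
        _ < (N : ℝ) := by exact_mod_cast Nat.lt_succ_self _
    calc c = (c / (d - c)) * (d - c) := by field_simp
      _ < (N : ℝ) * (d - c) := by
          exact mul_lt_mul_of_pos_right h1 hdc
  set j : ℕ := max k ⌈(N : ℝ) * c⌉₊ with hjdef
  have hjk : k ≤ j := le_max_left _ _
  have hjNc : (N : ℝ) * c ≤ (j : ℝ) := by
    calc (N : ℝ) * c ≤ (⌈(N : ℝ) * c⌉₊ : ℝ) := Nat.le_ceil _
      _ ≤ (j : ℝ) := by exact_mod_cast le_max_right k _
  have hajNc : (N : ℝ) * c < a j := lt_of_le_of_lt hjNc (ha j)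
  set y : ℝ := a j + (min (b j - a j) 1) / 2 with hydef
  have hminpos : 0 < min (b j - a j) 1 := lt_min (by linarith [hab j]) one_pos
  have hy1 : a j < y := by simp only [hydef]; linarith
  have hy2 : y < b j := by
    have : min (b j - a j) 1 ≤ b j - a j := min_le_left _ _
    simp only [hydef]; linarith [hab j]
  have hyNc : (N : ℝ) * c < y := lt_trans hajNc hy1
  have hy0 : 0 < y := by nlinarith
  have hyc : (N : ℝ) < y / c := by
    rw [lt_div_iff₀ hc]; linarith
  have hceil : N < ⌈y / c⌉₊ := Nat.lt_ceil.mpr hyc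
  set n : ℕ := ⌈y / c⌉₊ - 1 with hndef
  have hns : n + 1 = ⌈y / c⌉₊ := Nat.succ_pred_eq_of_pos (lt_of_le_of_lt (Nat.zero_le _) hceil)
  have hnN : N ≤ n := Nat.le_sub_one_of_lt hceil
  have hnN' : (N : ℝ) ≤ (n : ℝ) := by exact_mod_cast hnN
  have hn0 : (0 : ℝ) < (n : ℝ) := lt_of_lt_of_le one_pos (le_trans hN1' hnN')
  have hns' : (n : ℝ) + 1 = (⌈y / c⌉₊ : ℝ) := by exact_mod_cast hns
  have hnc : (n : ℝ) * c < y := by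
    have hlt : (⌈y / c⌉₊ : ℝ) < y / c + 1 := Nat.ceil_lt_add_one (le_of_lt (div_pos hy0 hc))
    have : (n : ℝ) < y / c := by linarith
    calc (n : ℝ) * c < (y / c) * c := mul_lt_mul_of_pos_right this hc
      _ = y := by field_simp
  have hnd : y < (n : ℝ) * d := by
    have h1 : y ≤ ((n : ℝ) + 1) * c := by
      have : y / c ≤ (⌈y / c⌉₊ : ℝ) := Nat.le_ceil _
      rw [hns']
      calc y = (y / c) * c := by field_simp
        _ ≤ (⌈y / c⌉₊ : ℝ) * c := mul_le_mul_of_nonneg_right this (le_of_lt hc)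
    have h2 : (N : ℝ) * (d - c) ≤ (n : ℝ) * (d - c) :=
      mul_le_mul_of_nonneg_right hnN' (le_of_lt hdc)
    nlinarith
  refine ⟨y / n, ⟨?_, ?_⟩, n, j, hjk, ?_⟩
  · rw [lt_div_iff₀ hn0]; linarith
  · rw [div_lt_iff₀ hn0]; linarith
  · rw [mul_div_cancel₀ _ (ne_of_gt hn0)]
    exact ⟨hy1, hy2⟩

/-- **Croft–Kingman lemma.** If `f : [0,∞) → ℝ` is right-continuous and for every `t > 0`
the sequence `f (n * t)` tends to `0` as `n → ∞` (over positive integers), then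
`f t → 0` as `t → ∞`. -/
theorem croft_kingman (f : ℝ → ℝ)
    (hf : ∀ x : ℝ, 0 ≤ x → ContinuousWithinAt f (Set.Ici x) x)
    (h : ∀ t : ℝ, 0 < t → Tendsto (fun n : ℕ => f (n * t)) atTop (nhds 0)) :
    Tendsto f atTop (nhds 0) := by
  by_contra hn
  rw [Metric.tendsto_nhds] at hn
  push_neg at hn
  obtain ⟨ε, εpos, hfreq⟩ := hn
  simp only [not_eventually, not_lt, Real.dist_0_eq_abs] at hfreq
  -- Step 1: construct intervals [a j, b j) with a j > j on which |f| > ε/2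
  have key : ∀ j : ℕ, ∃ a b : ℝ, (j : ℝ) < a ∧ a < b ∧ ∀ x ∈ Set.Ico a b, ε / 2 < |f x| := by
    intro j
    obtain ⟨s, hs1, hs2⟩ :=
      (hfreq.and_eventually (eventually_ge_atTop ((j : ℝ) + 1))).exists
    have hs0 : (0 : ℝ) ≤ s := le_trans (by positivity) hs2
    have hc := hf s hs0
    have hmem : {y : ℝ | ε / 2 < |y|} ∈ nhds (f s) := by
      apply IsOpen.mem_nhds
      · exact isOpen_lt continuous_const continuous_abs
      · simp only [Set.mem_setOf_eq]; linarith
    have hpre : f ⁻¹' {y : ℝ | ε / 2 < |y|} ∈ nhdsWithin s (Set.Ici s) := hc hmem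
    rw [mem_nhdsGE_iff_exists_Ico_subset] at hpre
    obtain ⟨u, hu, hsub⟩ := hpre
    exact ⟨s, u, by linarith, hu, fun x hx => hsub hx⟩
  choose a b ha hab hfab using key
  -- Step 2: Baire category argument
  set U : ℕ → Set ℝ := fun k =>
    (⋃ (n : ℕ) (j : ℕ) (_ : k ≤ j), (fun t : ℝ => (n : ℝ) * t) ⁻¹' Set.Ioo (a j) (b j)) ∪
      Set.Iio 1 with hUdef
  have hUopen : ∀ k, IsOpen (U k) := by
    intro k
    apply IsOpen.union _ isOpen_Iio
    apply isOpen_iUnion; intro n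
    apply isOpen_iUnion; intro j
    apply isOpen_iUnion; intro _
    exact isOpen_Ioo.preimage (by continuity)
  have hUdense : ∀ k, Dense (U k) := by
    intro k
    rw [Metric.dense_iff]
    intro x r hr
    rcases lt_or_ge x 1 with hx | hx
    · exact ⟨x, Metric.mem_ball_self hr, Or.inr hx⟩
    · have hc : (0 : ℝ) < x := lt_of_lt_of_le one_pos hx
      have hcd : x < x + min r 1 := by
        have : (0 : ℝ) < min r 1 := lt_min hr one_pos
        linarith
      obtain ⟨t, ht, n, jj, hjk, hnt⟩ := ck_core ha hab k hc hcd
      refine ⟨t, ?_, Or.inl ?_⟩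
      · rw [Metric.mem_ball, Real.dist_eq, abs_lt]
        constructor
        · have := min_le_left r 1; obtain ⟨h1, h2⟩ := ht; linarith
        · obtain ⟨h1, h2⟩ := ht; have := min_le_left r 1; linarith
      · exact Set.mem_iUnion.mpr ⟨n, Set.mem_iUnion.mpr ⟨jj, Set.mem_iUnion.mpr ⟨hjk, hnt⟩⟩⟩
  have hdense : Dense (⋂ k, U k) := dense_iInter_of_isOpen hUopen hUdense
  obtain ⟨t, htI, ht1⟩ := hdense.exists_mem_open isOpen_Ioi (Set.nonempty_Ioi (a := (1 : ℝ)))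
  have ht1' : (1 : ℝ) < t := ht1
  have ht0 : (0 : ℝ) < t := lt_trans one_pos ht1'
  -- Step 3: contradiction with f (n t) → 0
  have htend := h t ht0
  rw [Metric.tendsto_nhds] at htend
  obtain ⟨N, hN⟩ := Filter.eventually_atTop.mp (htend (ε / 2) (by linarith))
  set k : ℕ := ⌈(N : ℝ) * t⌉₊ with hkdef
  have htU : t ∈ U k := Set.mem_iInter.mp htI k
  rcases htU with htU | htU
  · obtain ⟨n, hn1⟩ := Set.mem_iUnion.mp htU
    obtain ⟨j, hn2⟩ := Set.mem_iUnion.mp hn1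
    obtain ⟨hjk, hnt⟩ := Set.mem_iUnion.mp hn2
    have hntIoo : (n : ℝ) * t ∈ Set.Ioo (a j) (b j) := hnt
    have hbig : ε / 2 < |f ((n : ℝ) * t)| :=
      hfab j _ ⟨le_of_lt hntIoo.1, hntIoo.2⟩
    have hchain : (N : ℝ) * t < (n : ℝ) * t := by
      calc (N : ℝ) * t ≤ (k : ℝ) := Nat.le_ceil _
        _ ≤ (j : ℝ) := by exact_mod_cast hjk
        _ < a j := ha j
        _ < (n : ℝ) * t := hntIoo.1
    have hNn : N ≤ n := by
      by_contra hcon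
      push_neg at hcon
      have : (n : ℝ) < (N : ℝ) := by exact_mod_cast hcon
      nlinarith
    have := hN n hNn
    rw [Real.dist_0_eq_abs] at this
    linarith
  · exact absurd htU (by simp; linarith)
end

section
/- Let \Pi be a Lévy measure on (0,\infty) with \int_0^\infty e^{\theta^* x}\Pi(dx) < \infty for some \theta^* > 0, and \lambda > 0. Define the measure \rho on [0,\infty)^2 by \rho(dv,dw) = (\theta^*/\lambda) e^{\theta^* v} \mathbf{1}_{w > 0}\Pi(dw + v)\,dv. Then for all \ell \geq 0, \rho(\{(v,w) : v + w > \ell\}) = \lambda^{-1}\int_\ell^\infty (e^{\theta^* x} - 1)\Pi(dx). -/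
open MeasureTheory Real Set
open scoped ENNReal

/-- **Law of the total jump from the joint undershoot–overshoot law.**
Let `Lev` be a Lévy measure on `(0, ∞)` with `∫ exp (θ* x) Lev(dx) < ∞` for some
`θ* > 0`, and `λ > 0`.  The measure `ρ(dv, dw) = (θ*/λ) e^{θ* v} 𝟙_{w>0} Lev(dw + v) dv`
on `[0,∞)²` (where `Lev(dw + v)` is the shift of `Lev` by `v`, i.e.
`∫ f(w) Lev(dw+v) = ∫_{x>v} f(x-v) Lev(dx)`, so that
`ρ({(v,w) : v + w > ℓ}) = ∫_{v>0} (θ*/λ) e^{θ* v} Lev(Ioi v ∩ Ioi ℓ) dv`) satisfies, for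
every `ℓ ≥ 0`, `ρ({(v,w) : v + w > ℓ}) = λ⁻¹ ∫_ℓ^∞ (exp (θ* x) - 1) Lev(dx)`. -/
theorem total_jump_law
    (Lev : Measure ℝ) [SFinite Lev] (θstar lam : ℝ)
    (hθstar : 0 < θstar) (hlam : 0 < lam)
    (hexp : ∫⁻ x in Set.Ioi (0:ℝ), ENNReal.ofReal (exp (θstar * x)) ∂Lev < ⊤)
    (ℓ : ℝ) (hℓ : 0 ≤ ℓ) :
    ∫⁻ v in Set.Ioi (0:ℝ),
        ENNReal.ofReal (θstar / lam * exp (θstar * v)) * Lev (Set.Ioi v ∩ Set.Ioi ℓ)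
      = ENNReal.ofReal (1 / lam)
          * ∫⁻ x in Set.Ioi ℓ, ENNReal.ofReal (exp (θstar * x) - 1) ∂Lev := by
  set F : ℝ → ℝ → ℝ≥0∞ := fun v x =>
    ENNReal.ofReal (θstar / lam * exp (θstar * v)) * (Ioi v).indicator (1 : ℝ → ℝ≥0∞) x
    with hF
  have hFmeas : AEMeasurable (Function.uncurry F)
      ((volume.restrict (Ioi (0:ℝ))).prod (Lev.restrict (Ioi ℓ))) := by
    apply Measurable.aemeasurable
    apply Measurable.mul
    · exact (measurable_fst.const_mul θstar).exp.const_mul (θstar / lam) |>.ennreal_ofReal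
    · have : (fun p : ℝ × ℝ => (Ioi p.1).indicator (1 : ℝ → ℝ≥0∞) p.2)
          = {p : ℝ × ℝ | p.1 < p.2}.indicator 1 := by
        ext p
        by_cases h : p.1 < p.2 <;> simp [Set.indicator, h]
      exact this ▸ (measurable_const.indicator (measurableSet_lt measurable_fst measurable_snd))
  calc
    ∫⁻ v in Ioi (0:ℝ),
        ENNReal.ofReal (θstar / lam * exp (θstar * v)) * Lev (Ioi v ∩ Ioi ℓ)
      = ∫⁻ v in Ioi (0:ℝ), ∫⁻ x in Ioi ℓ, F v x ∂Lev := by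
        refine setLIntegral_congr_fun measurableSet_Ioi (fun v _ => ?_)
        rw [hF]
        simp only
        rw [lintegral_const_mul' _ _ ENNReal.ofReal_ne_top,
          lintegral_indicator_one measurableSet_Ioi, Measure.restrict_apply measurableSet_Ioi]
    _ = ∫⁻ x in Ioi ℓ, ∫⁻ v in Ioi (0:ℝ), F v x ∂volume ∂Lev :=
        lintegral_lintegral_swap hFmeas
    _ = ∫⁻ x in Ioi ℓ, ENNReal.ofReal (1 / lam) * ENNReal.ofReal (exp (θstar * x) - 1) ∂Lev := by
        refine setLIntegral_congr_fun measurableSet_Ioi (fun x hx => ?_)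
        have hx0 : 0 < x := lt_of_le_of_lt hℓ hx
        have h1 : ∀ v : ℝ, F v x
            = (Iio x).indicator (fun v => ENNReal.ofReal (θstar / lam * exp (θstar * v))) v := by
          intro v
          by_cases h : v < x <;> simp [hF, Set.indicator, h]
        simp_rw [h1]
        rw [lintegral_indicator measurableSet_Iio, Measure.restrict_restrict measurableSet_Iio,
          Set.Iio_inter_Ioi]
        have hint : IntegrableOn (fun v => θstar / lam * exp (θstar * v)) (Ioo 0 x) := by
          apply (Continuous.integrableOn_Icc (by continuity)).mono_set Ioo_subset_Icc_self
        rw [← ofReal_integral_eq_lintegral_ofReal hint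
          (ae_of_all _ fun v => by positivity)]
        have hIoo : ∫ v in Ioo (0:ℝ) x, θstar / lam * exp (θstar * v)
            = ∫ v in (0:ℝ)..x, θstar / lam * exp (θstar * v) := by
          rw [intervalIntegral.integral_of_le hx0.le, ← integral_Ioc_eq_integral_Ioo]
        rw [hIoo, intervalIntegral.integral_const_mul,
          intervalIntegral.integral_comp_mul_left (fun t => exp t) (ne_of_gt hθstar)]
        simp only [mul_zero, integral_exp, smul_eq_mul, Real.exp_zero]
        have hnn : (0:ℝ) ≤ exp (θstar * x) - 1 := by
          have : (1:ℝ) ≤ exp (θstar * x) := by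
            rw [← Real.exp_zero]
            exact Real.exp_le_exp.mpr (by positivity)
          linarith
        rw [← ENNReal.ofReal_mul (by positivity)]
        congr 1
        field_simp
    _ = ENNReal.ofReal (1 / lam) * ∫⁻ x in Ioi ℓ, ENNReal.ofReal (exp (θstar * x) - 1) ∂Lev :=
        lintegral_const_mul' _ _ ENNReal.ofReal_ne_top
end
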